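/- (Proposition 1, consistency part.) In the linear instrumental variable model, the underspecified 2SLS estimator β̂_n = (X_nᵀ P_{Z_n} X_n)⁺ X_nᵀ P_{Z_n} y_n converges in probability, as n → ∞, to P_α β, the orthogonal projection of β onto the row space of α. -/

import Mathlib

open Matrix MeasureTheory ProbabilityTheory Filter Topology

/-- `Ap` is a Moore–Penrose pseudoinverse of `A`: the four Penrose equations. -/
def IsMoorePenrose {n m : Type*} [Fintype n] [Fintype m]
    (A : Matrix n m ℝ) (Ap : Matrix m n ℝ) : Prop :=
  A * Ap * A = A ∧ Ap * A * Ap = Ap ∧ (A * Ap)ᵀ = A * Ap ∧ (Ap * A)ᵀ = Ap * A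

namespace Stmt4Aux


lemma mp_unique {p q : Type*} [Fintype p] [Fintype q]
    {A : Matrix p q ℝ} {B C : Matrix q p ℝ}
    (hB : IsMoorePenrose A B) (hC : IsMoorePenrose A C) : B = C := by
  obtain ⟨hB1, hB2, hB3, hB4⟩ := hB
  obtain ⟨hC1, hC2, hC3, hC4⟩ := hC
  have hAB : A * B = A * C := by
    calc A * B = (A * B)ᵀ := hB3.symm
    _ = Bᵀ * Aᵀ := by rw [transpose_mul]
    _ = Bᵀ * (A * C * A)ᵀ := by rw [hC1]
    _ = Bᵀ * (Aᵀ * (A * C)ᵀ) := by rw [show A * C * A = (A*C)*A from rfl, transpose_mul]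
    _ = (Bᵀ * Aᵀ) * (A * C) := by rw [hC3, Matrix.mul_assoc]
    _ = (A * B)ᵀ * (A * C) := by rw [transpose_mul]
    _ = (A * B) * (A * C) := by rw [hB3]
    _ = (A * B * A) * C := by simp only [Matrix.mul_assoc]
    _ = A * C := by rw [hB1]
  have hBA : B * A = C * A := by
    calc B * A = (B * A)ᵀ := hB4.symm
    _ = Aᵀ * Bᵀ := by rw [transpose_mul]
    _ = (A * (C * A))ᵀ * Bᵀ := by rw [← Matrix.mul_assoc, hC1]
    _ = ((C * A)ᵀ * Aᵀ) * Bᵀ := by rw [transpose_mul]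
    _ = (C * A) * (Aᵀ * Bᵀ) := by rw [hC4, Matrix.mul_assoc]
    _ = (C * A) * (B * A)ᵀ := by rw [transpose_mul]
    _ = (C * A) * (B * A) := by rw [hB4]
    _ = C * (A * B * A) := by simp only [Matrix.mul_assoc]
    _ = C * A := by rw [hB1]
  calc B = B * A * B := hB2.symm
  _ = C * A * B := by rw [hBA]
  _ = C * (A * B) := by rw [Matrix.mul_assoc]
  _ = C * (A * C) := by rw [hAB]
  _ = C * A * C := by rw [Matrix.mul_assoc]
  _ = C := hC2

lemma mp_inv {p : Type*} [Fintype p] [DecidableEq p] {A : Matrix p p ℝ} (h : IsUnit A.det) :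
    IsMoorePenrose A A⁻¹ := by
  refine ⟨?_, ?_, ?_, ?_⟩ <;>
    simp [Matrix.mul_nonsing_inv A h, Matrix.nonsing_inv_mul A h]

/-- pinv of `Aᵀ * W * A` when `A*Aᵀ` and `W` are invertible. -/
lemma mp_sandwich {p q : Type*} [Fintype p] [Fintype q] [DecidableEq p]
    {A : Matrix p q ℝ} {W : Matrix p p ℝ}
    (hA : IsUnit (A * Aᵀ).det) (hW : IsUnit W.det) :
    IsMoorePenrose (Aᵀ * W * A) (Aᵀ * (A * Aᵀ)⁻¹ * W⁻¹ * (A * Aᵀ)⁻¹ * A) := by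
  have e1 : A * Aᵀ * (A * Aᵀ)⁻¹ = 1 := Matrix.mul_nonsing_inv _ hA
  have e2 : (A * Aᵀ)⁻¹ * (A * Aᵀ) = 1 := Matrix.nonsing_inv_mul _ hA
  have e3 : W * W⁻¹ = 1 := Matrix.mul_nonsing_inv _ hW
  have e4 : W⁻¹ * W = 1 := Matrix.nonsing_inv_mul _ hW
  have hGt : (A * Aᵀ)⁻¹ᵀ = (A * Aᵀ)⁻¹ := by
    rw [Matrix.transpose_nonsing_inv, transpose_mul, transpose_transpose]
  -- key products
  have key1 : (Aᵀ * W * A) * (Aᵀ * (A * Aᵀ)⁻¹ * W⁻¹ * (A * Aᵀ)⁻¹ * A) = Aᵀ * (A * Aᵀ)⁻¹ * A := by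
    calc (Aᵀ * W * A) * (Aᵀ * (A * Aᵀ)⁻¹ * W⁻¹ * (A * Aᵀ)⁻¹ * A)
        = Aᵀ * W * ((A * Aᵀ) * (A * Aᵀ)⁻¹) * W⁻¹ * ((A * Aᵀ)⁻¹ * A) := by
          simp only [Matrix.mul_assoc]
    _ = Aᵀ * (W * W⁻¹) * ((A * Aᵀ)⁻¹ * A) := by rw [e1]; simp only [Matrix.mul_one, Matrix.mul_assoc]
    _ = Aᵀ * (A * Aᵀ)⁻¹ * A := by rw [e3]; simp only [Matrix.mul_one, Matrix.mul_assoc]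
  have key2 : (Aᵀ * (A * Aᵀ)⁻¹ * W⁻¹ * (A * Aᵀ)⁻¹ * A) * (Aᵀ * W * A) = Aᵀ * (A * Aᵀ)⁻¹ * A := by
    calc (Aᵀ * (A * Aᵀ)⁻¹ * W⁻¹ * (A * Aᵀ)⁻¹ * A) * (Aᵀ * W * A)
        = Aᵀ * (A * Aᵀ)⁻¹ * W⁻¹ * ((A * Aᵀ)⁻¹ * (A * Aᵀ)) * (W * A) := by
          simp only [Matrix.mul_assoc]
    _ = Aᵀ * (A * Aᵀ)⁻¹ * (W⁻¹ * W) * A := by rw [e2]; simp only [Matrix.mul_one, Matrix.mul_assoc]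
    _ = Aᵀ * (A * Aᵀ)⁻¹ * A := by rw [e4]; simp only [Matrix.mul_one, Matrix.mul_assoc]
  have hsymm : (Aᵀ * (A * Aᵀ)⁻¹ * A)ᵀ = Aᵀ * (A * Aᵀ)⁻¹ * A := by
    simp only [transpose_mul, transpose_transpose, hGt, Matrix.mul_assoc]
  refine ⟨?_, ?_, ?_, ?_⟩
  · rw [key1]
    calc Aᵀ * (A * Aᵀ)⁻¹ * A * (Aᵀ * W * A) = Aᵀ * ((A * Aᵀ)⁻¹ * (A * Aᵀ)) * (W * A) := by
          simp only [Matrix.mul_assoc]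
    _ = Aᵀ * W * A := by rw [e2]; simp only [Matrix.mul_one, Matrix.mul_assoc]
  · rw [key2]
    calc Aᵀ * (A * Aᵀ)⁻¹ * A * (Aᵀ * (A * Aᵀ)⁻¹ * W⁻¹ * (A * Aᵀ)⁻¹ * A)
        = Aᵀ * ((A * Aᵀ)⁻¹ * ((A * Aᵀ) * (A * Aᵀ)⁻¹)) * W⁻¹ * ((A * Aᵀ)⁻¹ * A) := by
          simp only [Matrix.mul_assoc]
    _ = Aᵀ * (A * Aᵀ)⁻¹ * W⁻¹ * (A * Aᵀ)⁻¹ * A := by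
          rw [e1]; simp only [Matrix.mul_one, Matrix.mul_assoc]
  · rw [key1]; exact hsymm
  · rw [key2]; exact hsymm



-- matrices are equal iff mulVec agree on all vectors
lemma ext_mulVec {p q : ℕ} {M N : Matrix (Fin p) (Fin q) ℝ}
    (h : ∀ v, M.mulVec v = N.mulVec v) : M = N := by
  ext i j
  have := congrFun (h (Pi.single j 1)) i
  simpa [Matrix.mulVec_single] using this

lemma aat_isUnit {dz dx : ℕ} {α : Matrix (Fin dz) (Fin dx) ℝ} (hα : α.rank = dz) :
    IsUnit (α * αᵀ).det := by
  rw [← Matrix.isUnit_iff_isUnit_det]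
  rw [← Matrix.mulVec_injective_iff_isUnit]
  -- surjectivity of mulVecLin α
  have hsurj : Function.Surjective α.mulVecLin := by
    rw [← LinearMap.range_eq_top]
    apply Submodule.eq_top_of_finrank_eq
    rw [← Matrix.rank, hα]
    simp [Module.finrank_fintype_fun_eq_card]
  intro u v huv
  have key : ∀ w : Fin dx → ℝ, ∀ x, (α * αᵀ).mulVec x = 0 → x ⬝ᵥ α.mulVec w = 0 := by
    intro w x hx
    have h1 : x ⬝ᵥ (α * αᵀ).mulVec x = 0 := by rw [hx]; simp
    rw [← Matrix.mulVec_mulVec, Matrix.dotProduct_mulVec] at h1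
    have h2 : αᵀ.mulVec x = x ᵥ* α := Matrix.mulVec_transpose α x
    rw [h2] at h1
    have h3 : x ᵥ* α = 0 := by
      have := dotProduct_self_eq_zero.mp h1
      exact this
    rw [Matrix.dotProduct_mulVec, h3]
    simp
  have hd : ∀ x, (α * αᵀ).mulVec x = 0 → x = 0 := by
    intro x hx
    funext j
    have : x ⬝ᵥ x = 0 := by
      obtain ⟨w, hw⟩ := hsurj x
      have := key w x hx
      rw [Matrix.mulVecLin_apply] at hw
      rw [hw] at this
      exact this
    have := dotProduct_self_eq_zero.mp this
    simp [this]
  have : (α * αᵀ).mulVec u - (α * αᵀ).mulVec v = 0 := by rw [huv]; simp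
  rw [← Matrix.mulVec_sub] at this
  have := hd _ this
  exact sub_eq_zero.mp this
  




lemma fixes_range {p : ℕ} {P : Matrix (Fin p) (Fin p) ℝ} (hi : P * P = P)
    {x : Fin p → ℝ} (hx : x ∈ LinearMap.range P.mulVecLin) : P.mulVec x = x := by
  obtain ⟨y, hy⟩ := hx
  rw [Matrix.mulVecLin_apply] at hy
  rw [← hy, Matrix.mulVec_mulVec, hi]

lemma proj_eq {dz dx : ℕ} {α : Matrix (Fin dz) (Fin dx) ℝ} (hα : α.rank = dz)
    {P : Matrix (Fin dx) (Fin dx) ℝ} (hs : Pᵀ = P) (hi : P * P = P)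
    (hr : LinearMap.range P.mulVecLin = LinearMap.range αᵀ.mulVecLin) :
    P = αᵀ * (α * αᵀ)⁻¹ * α := by
  have hu := aat_isUnit hα
  have e1 : (α * αᵀ) * (α * αᵀ)⁻¹ = 1 := Matrix.mul_nonsing_inv _ hu
  have e2 : (α * αᵀ)⁻¹ * (α * αᵀ) = 1 := Matrix.nonsing_inv_mul _ hu
  have hGt : (α * αᵀ)⁻¹ᵀ = (α * αᵀ)⁻¹ := by
    rw [Matrix.transpose_nonsing_inv, transpose_mul, transpose_transpose]
  set Q := αᵀ * (α * αᵀ)⁻¹ * α with hQ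
  have hQat : Q * αᵀ = αᵀ := by
    calc Q * αᵀ = αᵀ * ((α * αᵀ)⁻¹ * (α * αᵀ)) := by simp only [hQ, Matrix.mul_assoc]
    _ = αᵀ := by rw [e2, Matrix.mul_one]
  have hQi : Q * Q = Q := by
    calc Q * Q = (Q * αᵀ) * ((α * αᵀ)⁻¹ * α) := by simp only [hQ, Matrix.mul_assoc]
    _ = Q := by rw [hQat, hQ, Matrix.mul_assoc]
  have hQs : Qᵀ = Q := by
    simp only [hQ, transpose_mul, transpose_transpose, hGt, Matrix.mul_assoc]
  have hrQ : LinearMap.range Q.mulVecLin = LinearMap.range αᵀ.mulVecLin := by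
    apply le_antisymm
    · rw [hQ, Matrix.mul_assoc, Matrix.mulVecLin_mul]
      exact LinearMap.range_comp_le_range _ _
    · conv_lhs => rw [← hQat]
      rw [Matrix.mulVecLin_mul]
      exact LinearMap.range_comp_le_range _ _
  have hPQ : P * Q = Q := by
    apply ext_mulVec
    intro v
    rw [← Matrix.mulVec_mulVec]
    apply fixes_range hi
    rw [hr, ← hrQ]
    exact ⟨v, rfl⟩
  have hQP : Q * P = P := by
    apply ext_mulVec
    intro v
    rw [← Matrix.mulVec_mulVec]
    apply fixes_range hQi
    rw [hrQ, ← hr]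
    exact ⟨v, rfl⟩
  have hP : P * Q = P := by
    have := congrArg Matrix.transpose hQP
    rw [transpose_mul, hs, hQs] at this
    exact this
  exact hP.symm.trans hPQ


lemma simplify {n dz dx : ℕ}
    (pinv : ∀ {p q : ℕ}, Matrix (Fin p) (Fin q) ℝ → Matrix (Fin q) (Fin p) ℝ)
    (hpinv : ∀ {p q : ℕ} (A : Matrix (Fin p) (Fin q) ℝ), IsMoorePenrose A (pinv A))
    (Zn : Matrix (Fin n) (Fin dz) ℝ) (Xn : Matrix (Fin n) (Fin dx) ℝ) (yn : Fin n → ℝ)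
    (hS : IsUnit (Znᵀ * Zn).det)
    (hAA : IsUnit ((Znᵀ * Xn) * (Znᵀ * Xn)ᵀ).det) :
    (pinv (Xnᵀ * (Zn * pinv (Znᵀ * Zn) * Znᵀ) * Xn)).mulVec
        ((Xnᵀ * (Zn * pinv (Znᵀ * Zn) * Znᵀ)).mulVec yn)
      = ((Znᵀ * Xn)ᵀ * ((Znᵀ * Xn) * (Znᵀ * Xn)ᵀ)⁻¹).mulVec (Znᵀ.mulVec yn) := by
  set A := Znᵀ * Xn with hA
  set W := (Znᵀ * Zn)⁻¹ with hW
  have hWu : IsUnit W.det := by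
    rw [hW]
    exact isUnit_nonsing_inv_det _ hS
  have h1 : pinv (Znᵀ * Zn) = W := mp_unique (hpinv _) (mp_inv hS)
  have hXZ : Xnᵀ * Zn = Aᵀ := by rw [hA, transpose_mul, transpose_transpose]
  have h2 : Xnᵀ * (Zn * pinv (Znᵀ * Zn) * Znᵀ) * Xn = Aᵀ * W * A := by
    rw [h1]
    calc Xnᵀ * (Zn * W * Znᵀ) * Xn = (Xnᵀ * Zn) * W * (Znᵀ * Xn) := by
          simp only [Matrix.mul_assoc]
    _ = Aᵀ * W * A := by rw [hXZ, hA]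
  have h3 : pinv (Aᵀ * W * A) = Aᵀ * (A * Aᵀ)⁻¹ * W⁻¹ * (A * Aᵀ)⁻¹ * A :=
    mp_unique (hpinv _) (mp_sandwich hAA hWu)
  have e2 : (A * Aᵀ)⁻¹ * (A * Aᵀ) = 1 := Matrix.nonsing_inv_mul _ hAA
  have e4 : W⁻¹ * W = 1 := Matrix.nonsing_inv_mul _ hWu
  have h4 : (Aᵀ * (A * Aᵀ)⁻¹ * W⁻¹ * (A * Aᵀ)⁻¹ * A) * (Xnᵀ * (Zn * pinv (Znᵀ * Zn) * Znᵀ))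
      = Aᵀ * (A * Aᵀ)⁻¹ * Znᵀ := by
    rw [h1]
    calc (Aᵀ * (A * Aᵀ)⁻¹ * W⁻¹ * (A * Aᵀ)⁻¹ * A) * (Xnᵀ * (Zn * W * Znᵀ))
        = Aᵀ * (A * Aᵀ)⁻¹ * W⁻¹ * (A * Aᵀ)⁻¹ * (A * ((Xnᵀ * Zn) * W * Znᵀ)) := by
          simp only [Matrix.mul_assoc]
    _ = Aᵀ * (A * Aᵀ)⁻¹ * W⁻¹ * (((A * Aᵀ)⁻¹ * (A * Aᵀ)) * (W * Znᵀ)) := by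
          rw [hXZ]; simp only [Matrix.mul_assoc]
    _ = Aᵀ * (A * Aᵀ)⁻¹ * Znᵀ := by
          rw [e2, Matrix.one_mul, ← Matrix.mul_assoc, Matrix.mul_assoc _ W⁻¹ W, e4,
            Matrix.mul_one]
  rw [h2, h3, Matrix.mulVec_mulVec, h4, ← Matrix.mulVec_mulVec]

lemma norm_simp {dz dx : ℕ} (c : ℝ) (hc : c ≠ 0) (A : Matrix (Fin dz) (Fin dx) ℝ)
    (hAA : IsUnit (A * Aᵀ).det) (u : Fin dz → ℝ) :
    ((c • A)ᵀ * ((c • A) * (c • A)ᵀ)⁻¹).mulVec (c • u)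
      = (Aᵀ * (A * Aᵀ)⁻¹).mulVec u := by
  have hsq : (c • A) * (c • A)ᵀ = (c * c) • (A * Aᵀ) := by
    rw [transpose_smul, Matrix.smul_mul, Matrix.mul_smul, smul_smul]
  haveI : Invertible (c * c) := invertibleOfNonzero (mul_ne_zero hc hc)
  have hinv : ((c * c) • (A * Aᵀ))⁻¹ = ⅟(c * c) • (A * Aᵀ)⁻¹ :=
    Matrix.inv_eq_left_inv (by
      rw [Matrix.smul_mul, Matrix.mul_smul, smul_smul, Matrix.nonsing_inv_mul _ hAA,
        invOf_mul_self, one_smul])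
  rw [hsq, hinv, transpose_smul]
  rw [Matrix.smul_mul, Matrix.mul_smul, smul_smul]
  rw [Matrix.smul_mulVec, Matrix.mulVec_smul]
  rw [smul_smul]
  have : c * ⅟(c * c) * c = 1 := by
    rw [invOf_eq_inv]
    field_simp
  rw [this, one_smul]




variable {Ω : Type*} [MeasurableSpace Ω] {μ : Measure Ω}

lemma lln_comp [IsProbabilityMeasure μ]
    {E : Type*} [MeasurableSpace E] (T : ℕ → Ω → E)
    (hTmeas : ∀ k, Measurable (T k))
    (hindep : iIndepFun T μ)
    (hident : ∀ k, Measure.map (T k) μ = Measure.map (T 0) μ)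
    (φ : E → ℝ) (hφ : Measurable φ)
    (hint : Integrable (fun ω => φ (T 0 ω)) μ) :
    ∀ᵐ ω ∂μ, Tendsto (fun n : ℕ => (∑ k ∈ Finset.range n, φ (T k ω)) / n) atTop
      (𝓝 (∫ ω, φ (T 0 ω) ∂μ)) := by
  apply strong_law_ae_real (fun k ω => φ (T k ω)) hint
  · intro i j hij
    exact (hindep.indepFun hij).comp hφ hφ
  · intro k
    exact IdentDistrib.comp ⟨(hTmeas k).aemeasurable, (hTmeas 0).aemeasurable, hident k⟩ hφ

lemma rad_mem {f : Ω → ℝ} (hf : Measurable f)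
    (h : Measure.map f μ
      = (2⁻¹ : ENNReal) • Measure.dirac (1 : ℝ) + (2⁻¹ : ENNReal) • Measure.dirac (-1 : ℝ)) :
    ∀ᵐ ω ∂μ, f ω = 1 ∨ f ω = -1 := by
  have hs : MeasurableSet ({1, -1} : Set ℝ) :=
    (measurableSet_singleton 1).union (measurableSet_singleton (-1))
  have : μ (f ⁻¹' ({1, -1} : Set ℝ)ᶜ) = 0 := by
    rw [← Measure.map_apply hf hs.compl, h]
    simp [Measure.dirac_apply' _ hs.compl]
  rw [ae_iff]
  have hset : {ω | ¬(f ω = 1 ∨ f ω = -1)} = f ⁻¹' ({1, -1} : Set ℝ)ᶜ := by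
    ext ω; simp
  rw [hset]
  exact this

lemma rad_bound {f : Ω → ℝ} (hf : Measurable f)
    (h : Measure.map f μ
      = (2⁻¹ : ENNReal) • Measure.dirac (1 : ℝ) + (2⁻¹ : ENNReal) • Measure.dirac (-1 : ℝ)) :
    ∀ᵐ ω ∂μ, |f ω| ≤ 1 := by
  filter_upwards [rad_mem hf h] with ω hω
  rcases hω with h1 | h1 <;> simp [h1]

lemma rad_integral [IsProbabilityMeasure μ] {f : Ω → ℝ} (hf : Measurable f)
    (h : Measure.map f μ
      = (2⁻¹ : ENNReal) • Measure.dirac (1 : ℝ) + (2⁻¹ : ENNReal) • Measure.dirac (-1 : ℝ)) :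
    ∫ ω, f ω ∂μ = 0 := by
  have : ∫ ω, f ω ∂μ = ∫ x, id x ∂(Measure.map f μ) := by
    rw [integral_map hf.aemeasurable aestronglyMeasurable_id]
    rfl
  rw [this, h]
  have hdint : ∀ a : ℝ, Integrable (id : ℝ → ℝ) (Measure.dirac a) := by
    intro a
    refine ⟨aestronglyMeasurable_id, ?_⟩
    simp [HasFiniteIntegral, lintegral_dirac]
  have h1 : Integrable (id : ℝ → ℝ) ((2⁻¹ : ENNReal) • Measure.dirac (1 : ℝ)) :=
    (hdint 1).smul_measure (by norm_num)
  have h2 : Integrable (id : ℝ → ℝ) ((2⁻¹ : ENNReal) • Measure.dirac (-1 : ℝ)) :=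
    (hdint (-1)).smul_measure (by norm_num)
  rw [integral_add_measure h1 h2, integral_smul_measure, integral_smul_measure,
    integral_dirac, integral_dirac]
  norm_num


instance matMS {m n R : Type*} [MeasurableSpace R] : MeasurableSpace (Matrix m n R) :=
  inferInstanceAs (MeasurableSpace (m → n → R))

instance matSC {m n : Type*} [Countable m] [Countable n] :
    SecondCountableTopology (Matrix m n ℝ) :=
  inferInstanceAs (SecondCountableTopology (m → n → ℝ))

instance matBorel {m n : Type*} [Countable m] [Countable n] : BorelSpace (Matrix m n ℝ) :=
  inferInstanceAs (BorelSpace (m → n → ℝ))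

lemma measurable_inv_comp {Ω : Type*} [MeasurableSpace Ω] {p : ℕ}
    {M : Ω → Matrix (Fin p) (Fin p) ℝ} (hM : Measurable M) :
    Measurable fun ω => (M ω)⁻¹ := by
  have hdet : Measurable fun ω => (M ω).det :=
    (Continuous.matrix_det continuous_id).measurable.comp hM
  have hadj : Measurable fun ω => (M ω).adjugate :=
    (Continuous.matrix_adjugate continuous_id).measurable.comp hM
  refine measurable_pi_lambda _ fun i => measurable_pi_lambda _ fun j => ?_
  have he : (fun ω => (M ω)⁻¹ i j) = fun ω => ((M ω).det)⁻¹ * (M ω).adjugate i j := by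
    funext ω
    rw [Matrix.inv_def, Ring.inverse_eq_inv]
    rfl
  rw [he]
  exact hdet.inv.mul ((measurable_pi_apply j).comp ((measurable_pi_apply i).comp hadj))

end Stmt4Aux

set_option maxHeartbeats 1600000 in
theorem stmt4
    -- model dimensions and parameters
    (dz dx : ℕ) (hdim : dz < dx)
    (α : Matrix (Fin dz) (Fin dx) ℝ) (hα : α.rank = dz)
    (β : Fin dx → ℝ)
    -- an i.i.d. sequence of samples (Z k, εX k, εY k) on a probability space
    (Ω : Type*) [MeasurableSpace Ω] (μ : Measure Ω) [IsProbabilityMeasure μ]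
    (Z : ℕ → Ω → Fin dz → ℝ) (εX : ℕ → Ω → Fin dx → ℝ) (εY : ℕ → Ω → ℝ)
    (hZmeas : ∀ k, Measurable (Z k)) (hεXmeas : ∀ k, Measurable (εX k))
    (hεYmeas : ∀ k, Measurable (εY k))
    (hiid_indep : iIndepFun
      (fun k ω => (Z k ω, εX k ω, εY k ω)) μ)
    (hiid_ident : ∀ k, Measure.map (fun ω => (Z k ω, εX k ω, εY k ω)) μ
      = Measure.map (fun ω => (Z 0 ω, εX 0 ω, εY 0 ω)) μ)
    -- Z has i.i.d. Rademacher components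
    (hZcomp_indep : ∀ k, iIndepFun (fun j ω => Z k ω j) μ)
    (hZrad : ∀ k j, Measure.map (fun ω => Z k ω j) μ
      = (2⁻¹ : ENNReal) • Measure.dirac (1 : ℝ) + (2⁻¹ : ENNReal) • Measure.dirac (-1 : ℝ))
    -- the instruments are independent of the (possibly mutually dependent) noise
    (hZε : ∀ k, IndepFun (Z k) (fun ω => (εX k ω, εY k ω)) μ)
    -- centered noise with finite second moments
    (hεXmean : ∀ k i, ∫ ω, εX k ω i ∂μ = 0)
    (hεYmean : ∀ k, ∫ ω, εY k ω ∂μ = 0)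
    (hεXL2 : ∀ k i, MemLp (fun ω => εX k ω i) 2 μ)
    (hεYL2 : ∀ k, MemLp (εY k) 2 μ)
    -- structural equations: X = αᵀ Z + εX and Y = βᵀ X + εY
    (X : ℕ → Ω → Fin dx → ℝ) (hX : ∀ k ω, X k ω = αᵀ.mulVec (Z k ω) + εX k ω)
    (Y : ℕ → Ω → ℝ) (hY : ∀ k ω, Y k ω = X k ω ⬝ᵥ β + εY k ω)
    -- a Moore–Penrose pseudoinverse operation on real matrices
    (pinv : ∀ {p q : ℕ}, Matrix (Fin p) (Fin q) ℝ → Matrix (Fin q) (Fin p) ℝ)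
    (hpinv : ∀ {p q : ℕ} (A : Matrix (Fin p) (Fin q) ℝ), IsMoorePenrose A (pinv A))
    -- the orthogonal projection onto the row space of α
    (Pα : Matrix (Fin dx) (Fin dx) ℝ) (hPαsymm : Pαᵀ = Pα) (hPαidem : Pα * Pα = Pα)
    (hPαrange : LinearMap.range Pα.mulVecLin = LinearMap.range αᵀ.mulVecLin)
    -- the underspecified 2SLS estimator built from the first n samples
    (βhat : (n : ℕ) → Ω → Fin dx → ℝ)
    (hβhat : ∀ (n : ℕ) (ω : Ω),
      βhat n ω =
        let Zn : Matrix (Fin n) (Fin dz) ℝ := Matrix.of fun i j => Z i ω j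
        let Xn : Matrix (Fin n) (Fin dx) ℝ := Matrix.of fun i j => X i ω j
        let yn : Fin n → ℝ := fun i => Y i ω
        let PZ : Matrix (Fin n) (Fin n) ℝ := Zn * pinv (Znᵀ * Zn) * Znᵀ
        (pinv (Xnᵀ * PZ * Xn)).mulVec ((Xnᵀ * PZ).mulVec yn)) :
    TendstoInMeasure μ βhat atTop (fun _ => Pα.mulVec β) := by
  classical
  -- measurability of the sample triple
  have hTmeas : ∀ k, Measurable (fun ω => (Z k ω, εX k ω, εY k ω)) :=
    fun k => (hZmeas k).prodMk ((hεXmeas k).prodMk (hεYmeas k))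
  have hZjmeas : ∀ k j, Measurable (fun ω => Z k ω j) :=
    fun k j => (measurable_pi_apply j).comp (hZmeas k)
  have hZjint : ∀ k j, Integrable (fun ω => Z k ω j) μ := by
    intro k j
    refine Integrable.mono' (integrable_const (1:ℝ)) (hZjmeas k j).aestronglyMeasurable ?_
    filter_upwards [Stmt4Aux.rad_bound (hZjmeas k j) (hZrad k j)] with ω hω
    simpa using hω
  -- LLN for products of coordinates
  have lln : ∀ φ : (Fin dz → ℝ) × (Fin dx → ℝ) × ℝ → ℝ, Measurable φ →
      Integrable (fun ω => φ (Z 0 ω, εX 0 ω, εY 0 ω)) μ →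
      ∀ᵐ ω ∂μ, Tendsto
        (fun n : ℕ => (∑ k ∈ Finset.range n, φ (Z k ω, εX k ω, εY k ω)) / n) atTop
        (𝓝 (∫ ω, φ (Z 0 ω, εX 0 ω, εY 0 ω) ∂μ)) := by
    intro φ hφ hint
    exact Stmt4Aux.lln_comp (fun k ω => (Z k ω, εX k ω, εY k ω)) hTmeas hiid_indep
      hiid_ident φ hφ hint
  -- integrals
  have hIZZ : ∀ j j' : Fin dz, ∫ ω, Z 0 ω j * Z 0 ω j' ∂μ = if j = j' then 1 else 0 := by
    intro j j'
    by_cases h : j = j'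
    · subst h
      simp only [if_pos rfl]
      have : ∀ᵐ ω ∂μ, Z 0 ω j * Z 0 ω j = 1 := by
        filter_upwards [Stmt4Aux.rad_mem (hZjmeas 0 j) (hZrad 0 j)] with ω hω
        rcases hω with h1 | h1 <;> rw [h1] <;> norm_num
      rw [integral_congr_ae this]
      simp
    · rw [if_neg h]
      have hind : IndepFun (fun ω => Z 0 ω j) (fun ω => Z 0 ω j') μ :=
        (hZcomp_indep 0).indepFun h
      have hre : (fun ω => Z 0 ω j * Z 0 ω j')
          = (fun ω => Z 0 ω j) * (fun ω => Z 0 ω j') := rfl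
      rw [hre, hind.integral_mul_eq_mul_integral (hZjint 0 j).aestronglyMeasurable (hZjint 0 j').aestronglyMeasurable]
      rw [Stmt4Aux.rad_integral (hZjmeas 0 j) (hZrad 0 j)]
      ring
  have hεXimeas : ∀ k i, Measurable (fun ω => εX k ω i) :=
    fun k i => (measurable_pi_apply i).comp (hεXmeas k)
  have hεXiint : ∀ k i, Integrable (fun ω => εX k ω i) μ :=
    fun k i => (hεXL2 k i).integrable one_le_two
  have hεYint : ∀ k, Integrable (εY k) μ := fun k => (hεYL2 k).integrable one_le_two
  have hIZX : ∀ (j : Fin dz) (i : Fin dx), ∫ ω, Z 0 ω j * εX 0 ω i ∂μ = 0 := by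
    intro j i
    have hind : IndepFun (fun ω => Z 0 ω j) (fun ω => εX 0 ω i) μ := by
      have := (hZε 0).comp (measurable_pi_apply j)
        ((measurable_pi_apply i).comp (measurable_fst : Measurable (Prod.fst :
          (Fin dx → ℝ) × ℝ → (Fin dx → ℝ))))
      exact this
    have hre : (fun ω => Z 0 ω j * εX 0 ω i)
        = (fun ω => Z 0 ω j) * (fun ω => εX 0 ω i) := rfl
    rw [hre, hind.integral_mul_eq_mul_integral (hZjint 0 j).aestronglyMeasurable (hεXiint 0 i).aestronglyMeasurable, hεXmean 0 i]
    ring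
  have hIZY : ∀ j : Fin dz, ∫ ω, Z 0 ω j * εY 0 ω ∂μ = 0 := by
    intro j
    have hind : IndepFun (fun ω => Z 0 ω j) (εY 0) μ := by
      have := (hZε 0).comp (measurable_pi_apply j)
        (measurable_snd : Measurable (Prod.snd : (Fin dx → ℝ) × ℝ → ℝ))
      exact this
    have hre : (fun ω => Z 0 ω j * εY 0 ω)
        = (fun ω => Z 0 ω j) * (εY 0) := rfl
    rw [hre, hind.integral_mul_eq_mul_integral (hZjint 0 j).aestronglyMeasurable (hεYint 0).aestronglyMeasurable, hεYmean 0]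
    ring
  -- a.e. convergence of empirical averages
  have haeZZ : ∀ (j j' : Fin dz), ∀ᵐ ω ∂μ, Tendsto
      (fun n : ℕ => (∑ k ∈ Finset.range n, Z k ω j * Z k ω j') / n) atTop
      (𝓝 (if j = j' then (1:ℝ) else 0)) := by
    intro j j'
    have hφ : Measurable (fun p : (Fin dz → ℝ) × (Fin dx → ℝ) × ℝ => p.1 j * p.1 j') :=
      ((measurable_pi_apply j).comp measurable_fst).mul
        ((measurable_pi_apply j').comp measurable_fst)
    have hint : Integrable (fun ω => Z 0 ω j * Z 0 ω j') μ := by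
      refine Integrable.mono' (integrable_const (1:ℝ))
        ((hZjmeas 0 j).mul (hZjmeas 0 j')).aestronglyMeasurable ?_
      filter_upwards [Stmt4Aux.rad_bound (hZjmeas 0 j) (hZrad 0 j),
        Stmt4Aux.rad_bound (hZjmeas 0 j') (hZrad 0 j')] with ω h1 h2
      have : |Z 0 ω j * Z 0 ω j'| ≤ 1 := by
        rw [abs_mul]
        exact mul_le_one₀ h1 (abs_nonneg _) h2
      simpa [abs_mul] using this
    have h := lln _ hφ hint
    simpa [hIZZ j j'] using h
  have haeZX : ∀ (j : Fin dz) (i : Fin dx), ∀ᵐ ω ∂μ, Tendsto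
      (fun n : ℕ => (∑ k ∈ Finset.range n, Z k ω j * εX k ω i) / n) atTop (𝓝 (0:ℝ)) := by
    intro j i
    have hφ : Measurable (fun p : (Fin dz → ℝ) × (Fin dx → ℝ) × ℝ => p.1 j * p.2.1 i) :=
      ((measurable_pi_apply j).comp measurable_fst).mul
        ((measurable_pi_apply i).comp (measurable_fst.comp measurable_snd))
    have hint : Integrable (fun ω => Z 0 ω j * εX 0 ω i) μ := by
      refine Integrable.mono' (hεXiint 0 i).abs
        ((hZjmeas 0 j).mul (hεXimeas 0 i)).aestronglyMeasurable ?_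
      filter_upwards [Stmt4Aux.rad_bound (hZjmeas 0 j) (hZrad 0 j)] with ω h1
      have : |Z 0 ω j * εX 0 ω i| ≤ |εX 0 ω i| := by
        rw [abs_mul]
        exact mul_le_of_le_one_left (abs_nonneg _) h1
      simpa [abs_mul] using this
    have h := lln _ hφ hint
    simpa [hIZX j i] using h
  have haeZY : ∀ (j : Fin dz), ∀ᵐ ω ∂μ, Tendsto
      (fun n : ℕ => (∑ k ∈ Finset.range n, Z k ω j * εY k ω) / n) atTop (𝓝 (0:ℝ)) := by
    intro j
    have hφ : Measurable (fun p : (Fin dz → ℝ) × (Fin dx → ℝ) × ℝ => p.1 j * p.2.2) :=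
      ((measurable_pi_apply j).comp measurable_fst).mul
        (measurable_snd.comp measurable_snd)
    have hint : Integrable (fun ω => Z 0 ω j * εY 0 ω) μ := by
      refine Integrable.mono' (hεYint 0).abs
        ((hZjmeas 0 j).mul (hεYmeas 0)).aestronglyMeasurable ?_
      filter_upwards [Stmt4Aux.rad_bound (hZjmeas 0 j) (hZrad 0 j)] with ω h1
      have : |Z 0 ω j * εY 0 ω| ≤ |εY 0 ω| := by
        rw [abs_mul]
        exact mul_le_of_le_one_left (abs_nonneg _) h1
      simpa [abs_mul] using this
    have h := lln _ hφ hint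
    simpa [hIZY j] using h
  have hae : ∀ᵐ ω ∂μ,
      (∀ j j' : Fin dz, Tendsto
        (fun n : ℕ => (∑ k ∈ Finset.range n, Z k ω j * Z k ω j') / n) atTop
        (𝓝 (if j = j' then (1:ℝ) else 0)))
      ∧ (∀ (j : Fin dz) (i : Fin dx), Tendsto
        (fun n : ℕ => (∑ k ∈ Finset.range n, Z k ω j * εX k ω i) / n) atTop (𝓝 (0:ℝ)))
      ∧ (∀ j : Fin dz, Tendsto
        (fun n : ℕ => (∑ k ∈ Finset.range n, Z k ω j * εY k ω) / n) atTop (𝓝 (0:ℝ))) :=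
    ((ae_all_iff.2 fun j => ae_all_iff.2 fun j' => haeZZ j j').and
      ((ae_all_iff.2 fun j => ae_all_iff.2 fun i => haeZX j i).and
        (ae_all_iff.2 fun j => haeZY j)))
  -- empirical matrices
  set SS : ℕ → Ω → Matrix (Fin dz) (Fin dz) ℝ :=
    fun n ω => Matrix.of fun j j' => (∑ k ∈ Finset.range n, Z k ω j * Z k ω j') / n with hSS
  set AA : ℕ → Ω → Matrix (Fin dz) (Fin dx) ℝ :=
    fun n ω => Matrix.of fun j i => (∑ k ∈ Finset.range n, Z k ω j * X k ω i) / n with hAA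
  set bb : ℕ → Ω → (Fin dz → ℝ) :=
    fun n ω j => (∑ k ∈ Finset.range n, Z k ω j * Y k ω) / n with hbb
  set gg : ℕ → Ω → (Fin dx → ℝ) :=
    fun n ω => ((AA n ω)ᵀ * (AA n ω * (AA n ω)ᵀ)⁻¹).mulVec (bb n ω) with hgg
  have hAent : ∀ n ω (j : Fin dz) (i : Fin dx), AA n ω j i
      = (∑ l, α l i * ((∑ k ∈ Finset.range n, Z k ω j * Z k ω l) / n))
        + (∑ k ∈ Finset.range n, Z k ω j * εX k ω i) / n := by
    intro n ω j i
    have hterm : ∀ k, Z k ω j * X k ω i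
        = (∑ l, α l i * (Z k ω j * Z k ω l)) + Z k ω j * εX k ω i := by
      intro k
      rw [hX k ω]
      simp only [Pi.add_apply, Matrix.mulVec, dotProduct, Matrix.transpose_apply]
      rw [mul_add, Finset.mul_sum]
      congr 1
      exact Finset.sum_congr rfl fun l _ => by ring
    show (∑ k ∈ Finset.range n, Z k ω j * X k ω i) / n = _
    rw [Finset.sum_congr rfl fun k _ => hterm k, Finset.sum_add_distrib, add_div]
    congr 1
    rw [Finset.sum_comm, Finset.sum_div]
    exact Finset.sum_congr rfl fun l _ => by rw [← Finset.mul_sum, mul_div_assoc]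
  have hbent : ∀ n ω (j : Fin dz), bb n ω j
      = (∑ i, β i * AA n ω j i) + (∑ k ∈ Finset.range n, Z k ω j * εY k ω) / n := by
    intro n ω j
    have hterm : ∀ k, Z k ω j * Y k ω
        = (∑ i, β i * (Z k ω j * X k ω i)) + Z k ω j * εY k ω := by
      intro k
      rw [hY k ω]
      simp only [dotProduct]
      rw [mul_add, Finset.mul_sum]
      congr 1
      exact Finset.sum_congr rfl fun i _ => by ring
    show (∑ k ∈ Finset.range n, Z k ω j * Y k ω) / n = _
    rw [Finset.sum_congr rfl fun k _ => hterm k, Finset.sum_add_distrib, add_div]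
    congr 1
    rw [Finset.sum_comm, Finset.sum_div]
    refine Finset.sum_congr rfl fun i _ => ?_
    rw [← Finset.mul_sum, mul_div_assoc]
    rfl
  have hαu := Stmt4Aux.aat_isUnit hα
  have hDne : (α * αᵀ).det ≠ 0 := by
    intro h0
    rw [h0] at hαu
    simpa using hαu
  have hPQ : Pα = αᵀ * (α * αᵀ)⁻¹ * α := Stmt4Aux.proj_eq hα hPαsymm hPαidem hPαrange
  have hgood : ∀ᵐ ω ∂μ,
      Tendsto (fun n => gg n ω) atTop (𝓝 (Pα.mulVec β))
      ∧ Tendsto (fun n => (SS n ω).det) atTop (𝓝 (1:ℝ))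
      ∧ Tendsto (fun n => (AA n ω * (AA n ω)ᵀ).det) atTop (𝓝 ((α * αᵀ).det)) := by
    filter_upwards [hae] with ω hω
    obtain ⟨hZZ, hZX, hZY⟩ := hω
    have hStend : Tendsto (fun n => SS n ω) atTop (𝓝 (1 : Matrix (Fin dz) (Fin dz) ℝ)) := by
      refine tendsto_pi_nhds.2 ?_
      intro j
      rw [tendsto_pi_nhds]
      intro j'
      simpa [hSS, Matrix.one_apply] using hZZ j j'
    have hAij : ∀ (j : Fin dz) (i : Fin dx),
        Tendsto (fun n => AA n ω j i) atTop (𝓝 (α j i)) := by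
      intro j i
      have h1 : Tendsto (fun n : ℕ =>
          (∑ l, α l i * ((∑ k ∈ Finset.range n, Z k ω j * Z k ω l) / n))
          + (∑ k ∈ Finset.range n, Z k ω j * εX k ω i) / n) atTop
          (𝓝 ((∑ l, α l i * (if j = l then (1:ℝ) else 0)) + 0)) := by
        refine Tendsto.add ?_ (hZX j i)
        exact tendsto_finset_sum _ fun l _ => tendsto_const_nhds.mul (hZZ j l)
      have h2 : (∑ l, α l i * (if j = l then (1:ℝ) else 0)) + 0 = α j i := by
        simp [eq_comm]
      rw [show (fun n => AA n ω j i) = fun n : ℕ =>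
          (∑ l, α l i * ((∑ k ∈ Finset.range n, Z k ω j * Z k ω l) / n))
          + (∑ k ∈ Finset.range n, Z k ω j * εX k ω i) / n from funext fun n => hAent n ω j i]
      rw [← h2]
      exact h1
    have hAtend : Tendsto (fun n => AA n ω) atTop (𝓝 α) := by
      refine tendsto_pi_nhds.2 ?_
      intro j
      rw [tendsto_pi_nhds]
      intro i
      exact hAij j i
    have hbtend : Tendsto (fun n => bb n ω) atTop (𝓝 (α.mulVec β)) := by
      rw [tendsto_pi_nhds]
      intro j
      have h1 : Tendsto (fun n : ℕ =>
          (∑ i, β i * AA n ω j i) + (∑ k ∈ Finset.range n, Z k ω j * εY k ω) / n) atTop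
          (𝓝 ((∑ i, β i * α j i) + 0)) := by
        refine Tendsto.add ?_ (hZY j)
        exact tendsto_finset_sum _ fun i _ => tendsto_const_nhds.mul (hAij j i)
      have h2 : (∑ i, β i * α j i) + 0 = α.mulVec β j := by
        simp [Matrix.mulVec, dotProduct, mul_comm]
      rw [show (fun n => bb n ω j) = fun n : ℕ =>
          (∑ i, β i * AA n ω j i) + (∑ k ∈ Finset.range n, Z k ω j * εY k ω) / n from
          funext fun n => hbent n ω j]
      rw [← h2]
      exact h1
    have hMul : Tendsto (fun n => AA n ω * (AA n ω)ᵀ) atTop (𝓝 (α * αᵀ)) := by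
      have cont : Continuous (fun M : Matrix (Fin dz) (Fin dx) ℝ => M * Mᵀ) :=
        continuous_id.matrix_mul continuous_id.matrix_transpose
      exact (cont.tendsto α).comp hAtend
    have hdet2 : Tendsto (fun n => (AA n ω * (AA n ω)ᵀ).det) atTop (𝓝 ((α * αᵀ).det)) :=
      ((Continuous.matrix_det continuous_id).tendsto _).comp hMul
    have hdetS : Tendsto (fun n => (SS n ω).det) atTop (𝓝 (1:ℝ)) := by
      have := ((Continuous.matrix_det continuous_id).tendsto
        (1 : Matrix (Fin dz) (Fin dz) ℝ)).comp hStend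
      simpa [Function.comp_def] using this
    have hadj : Tendsto (fun n => (AA n ω * (AA n ω)ᵀ).adjugate) atTop
        (𝓝 ((α * αᵀ).adjugate)) :=
      ((Continuous.matrix_adjugate continuous_id).tendsto _).comp hMul
    have hinv : Tendsto (fun n => (AA n ω * (AA n ω)ᵀ)⁻¹) atTop (𝓝 ((α * αᵀ)⁻¹)) := by
      have h4 : Tendsto (fun n => ((AA n ω * (AA n ω)ᵀ).det)⁻¹ • (AA n ω * (AA n ω)ᵀ).adjugate)
          atTop (𝓝 (((α * αᵀ).det)⁻¹ • (α * αᵀ).adjugate)) := (hdet2.inv₀ hDne).smul hadj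
      simpa [Matrix.inv_def, Ring.inverse_eq_inv] using h4
    have htransp : Tendsto (fun n => (AA n ω)ᵀ) atTop (𝓝 αᵀ) :=
      ((continuous_id.matrix_transpose).tendsto _).comp hAtend
    have hmul2 : Tendsto (fun n => (AA n ω)ᵀ * (AA n ω * (AA n ω)ᵀ)⁻¹) atTop
        (𝓝 (αᵀ * (α * αᵀ)⁻¹)) := by
      have cont : Continuous (fun p : Matrix (Fin dx) (Fin dz) ℝ ×
          Matrix (Fin dz) (Fin dz) ℝ => p.1 * p.2) := continuous_fst.matrix_mul continuous_snd
      exact (cont.tendsto (αᵀ, (α * αᵀ)⁻¹)).comp (htransp.prodMk_nhds hinv)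
    have hggt : Tendsto (fun n => gg n ω) atTop
        (𝓝 ((αᵀ * (α * αᵀ)⁻¹).mulVec (α.mulVec β))) := by
      have cont : Continuous (fun p : Matrix (Fin dx) (Fin dz) ℝ × (Fin dz → ℝ) =>
          p.1.mulVec p.2) := continuous_fst.matrix_mulVec continuous_snd
      exact (cont.tendsto _).comp (hmul2.prodMk_nhds hbtend)
    refine ⟨?_, hdetS, hdet2⟩
    have hval : (αᵀ * (α * αᵀ)⁻¹).mulVec (α.mulVec β) = Pα.mulVec β := by
      rw [Matrix.mulVec_mulVec, hPQ, Matrix.mul_assoc]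
    rw [← hval]
    exact hggt
  -- measurability
  have hXimeas : ∀ k (i : Fin dx), Measurable (fun ω => X k ω i) := by
    intro k i
    have he : (fun ω => X k ω i) = fun ω => (∑ l, αᵀ i l * Z k ω l) + εX k ω i := by
      funext ω
      rw [hX k ω]
      rfl
    rw [he]
    exact (Finset.measurable_sum _ fun l _ =>
      (hZjmeas k l).const_mul _).add (hεXimeas k i)
  have hYkmeas : ∀ k, Measurable (Y k) := by
    intro k
    have he : Y k = fun ω => (∑ i, X k ω i * β i) + εY k ω := by
      funext ω
      rw [hY k ω]
      rfl
    rw [he]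
    exact (Finset.measurable_sum _ fun i _ =>
      (hXimeas k i).mul_const _).add (hεYmeas k)
  have hSSmeas : ∀ n, Measurable (fun ω => SS n ω) := by
    intro n
    refine measurable_pi_lambda _ fun j => measurable_pi_lambda _ fun j' => ?_
    exact (Finset.measurable_sum _ fun k _ => (hZjmeas k j).mul (hZjmeas k j')).div_const _
  have hAAmeas : ∀ n, Measurable (fun ω => AA n ω) := by
    intro n
    refine measurable_pi_lambda _ fun j => measurable_pi_lambda _ fun i => ?_
    exact (Finset.measurable_sum _ fun k _ => (hZjmeas k j).mul (hXimeas k i)).div_const _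
  have hbbmeas : ∀ n, Measurable (fun ω => bb n ω) := by
    intro n
    refine measurable_pi_lambda _ fun j => ?_
    exact (Finset.measurable_sum _ fun k _ => (hZjmeas k j).mul (hYkmeas k)).div_const _
  have hMnmeas : ∀ n, Measurable fun ω => AA n ω * (AA n ω)ᵀ := fun n =>
    ((continuous_id.matrix_mul continuous_id.matrix_transpose).measurable).comp (hAAmeas n)
  have hdetSmeas : ∀ n, Measurable fun ω => (SS n ω).det := fun n =>
    (Continuous.matrix_det continuous_id).measurable.comp (hSSmeas n)
  have hdetAmeas : ∀ n, Measurable fun ω => (AA n ω * (AA n ω)ᵀ).det := fun n =>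
    (Continuous.matrix_det continuous_id).measurable.comp (hMnmeas n)
  have hggmeas : ∀ n, Measurable (gg n) := by
    intro n
    have hinvmeas := Stmt4Aux.measurable_inv_comp (hMnmeas n)
    have htmeas : Measurable fun ω => (AA n ω)ᵀ :=
      (continuous_id.matrix_transpose).measurable.comp (hAAmeas n)
    have hprodm : Measurable fun ω => (AA n ω)ᵀ * (AA n ω * (AA n ω)ᵀ)⁻¹ :=
      ((continuous_fst.matrix_mul continuous_snd).measurable).comp (htmeas.prodMk hinvmeas)
    exact ((continuous_fst.matrix_mulVec continuous_snd).measurable).comp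
      (hprodm.prodMk (hbbmeas n))
  -- identification of the estimator
  have hβg : ∀ n : ℕ, 1 ≤ n → ∀ ω, IsUnit (SS n ω).det →
      IsUnit (AA n ω * (AA n ω)ᵀ).det → βhat n ω = gg n ω := by
    intro n hn ω hdS hdA
    have hnR : (n:ℝ) ≠ 0 := Nat.cast_ne_zero.2 (by omega)
    set Zn : Matrix (Fin n) (Fin dz) ℝ := Matrix.of fun i j => Z i ω j with hZn
    set Xn : Matrix (Fin n) (Fin dx) ℝ := Matrix.of fun i j => X i ω j with hXn
    set yn : Fin n → ℝ := fun i => Y i ω with hyn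
    have hZZn : Znᵀ * Zn = (n:ℝ) • SS n ω := by
      ext j j'
      simp only [Matrix.mul_apply, hZn, Matrix.transpose_apply, Matrix.of_apply,
        Matrix.smul_apply, hSS, smul_eq_mul]
      rw [Fin.sum_univ_eq_sum_range (fun k => Z k ω j * Z k ω j') n]
      field_simp
    have hZXn : Znᵀ * Xn = (n:ℝ) • AA n ω := by
      ext j i
      simp only [Matrix.mul_apply, hZn, hXn, Matrix.transpose_apply, Matrix.of_apply,
        Matrix.smul_apply, hAA, smul_eq_mul]
      rw [Fin.sum_univ_eq_sum_range (fun k => Z k ω j * X k ω i) n]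
      field_simp
    have hZyn : Znᵀ.mulVec yn = (n:ℝ) • bb n ω := by
      funext j
      simp only [Matrix.mulVec, dotProduct, hZn, hyn, Matrix.transpose_apply,
        Matrix.of_apply, Pi.smul_apply, hbb, smul_eq_mul]
      rw [Fin.sum_univ_eq_sum_range (fun k => Z k ω j * Y k ω) n]
      field_simp
    have hdZZ : IsUnit (Znᵀ * Zn).det := by
      rw [hZZn, Matrix.det_smul]
      exact isUnit_iff_ne_zero.2 (mul_ne_zero (pow_ne_zero _ hnR)
        (isUnit_iff_ne_zero.1 hdS))
    have hdAAn : IsUnit ((Znᵀ * Xn) * (Znᵀ * Xn)ᵀ).det := by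
      rw [hZXn, Matrix.transpose_smul, Matrix.smul_mul, Matrix.mul_smul, smul_smul,
        Matrix.det_smul]
      exact isUnit_iff_ne_zero.2 (mul_ne_zero (pow_ne_zero _ (mul_ne_zero hnR hnR))
        (isUnit_iff_ne_zero.1 hdA))
    rw [hβhat n ω]
    show (pinv (Xnᵀ * (Zn * pinv (Znᵀ * Zn) * Znᵀ) * Xn)).mulVec
        ((Xnᵀ * (Zn * pinv (Znᵀ * Zn) * Znᵀ)).mulVec yn) = gg n ω
    rw [Stmt4Aux.simplify pinv hpinv Zn Xn yn hdZZ hdAAn]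
    rw [hZXn, hZyn]
    exact Stmt4Aux.norm_simp (n:ℝ) hnR (AA n ω) hdA (bb n ω)
  -- convergence in measure
  have htimg : TendstoInMeasure μ gg atTop (fun _ => Pα.mulVec β) :=
    tendstoInMeasure_of_tendsto_ae (fun n => (hggmeas n).aestronglyMeasurable)
      (hgood.mono fun ω h => h.1)
  have htimS : TendstoInMeasure μ (fun n ω => (SS n ω).det) atTop (fun _ => (1:ℝ)) :=
    tendstoInMeasure_of_tendsto_ae (fun n => (hdetSmeas n).aestronglyMeasurable)
      (hgood.mono fun ω h => h.2.1)
  have htimA : TendstoInMeasure μ (fun n ω => (AA n ω * (AA n ω)ᵀ).det) atTop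
      (fun _ => (α * αᵀ).det) :=
    tendstoInMeasure_of_tendsto_ae (fun n => (hdetAmeas n).aestronglyMeasurable)
      (hgood.mono fun ω h => h.2.2)
  rw [tendstoInMeasure_iff_dist] at htimS htimA htimg ⊢
  intro ε hε
  have h1 := htimS (1/2) (by norm_num)
  have h2 := htimA (|(α * αᵀ).det|) (abs_pos.2 hDne)
  have h3 := htimg ε hε
  have hsub : ∀ n : ℕ, 1 ≤ n → μ {ω | ε ≤ dist (βhat n ω) (Pα.mulVec β)} ≤
      μ {ω | (1/2 : ℝ) ≤ dist ((SS n ω).det) 1}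
      + μ {ω | |(α * αᵀ).det| ≤ dist ((AA n ω * (AA n ω)ᵀ).det) ((α * αᵀ).det)}
      + μ {ω | ε ≤ dist (gg n ω) (Pα.mulVec β)} := by
    intro n hn
    have hsubset : {ω | ε ≤ dist (βhat n ω) (Pα.mulVec β)} ⊆
        ({ω | (1/2 : ℝ) ≤ dist ((SS n ω).det) 1}
          ∪ {ω | |(α * αᵀ).det| ≤ dist ((AA n ω * (AA n ω)ᵀ).det) ((α * αᵀ).det)})
          ∪ {ω | ε ≤ dist (gg n ω) (Pα.mulVec β)} := by
      intro ω hω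
      by_cases hS' : IsUnit (SS n ω).det
      · by_cases hA' : IsUnit (AA n ω * (AA n ω)ᵀ).det
        · right
          have := hβg n hn ω hS' hA'
          simpa [Set.mem_setOf_eq, ← this] using hω
        · left; right
          have h0 : (AA n ω * (AA n ω)ᵀ).det = 0 := by
            by_contra h
            exact hA' (isUnit_iff_ne_zero.2 h)
          simp [Set.mem_setOf_eq, h0, Real.dist_eq]
      · left; left
        have h0 : (SS n ω).det = 0 := by
          by_contra h
          exact hS' (isUnit_iff_ne_zero.2 h)
        simp only [Set.mem_setOf_eq, h0, Real.dist_eq, zero_sub, abs_neg, abs_one]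
        norm_num
    calc μ {ω | ε ≤ dist (βhat n ω) (Pα.mulVec β)}
        ≤ μ (({ω | (1/2 : ℝ) ≤ dist ((SS n ω).det) 1}
          ∪ {ω | |(α * αᵀ).det| ≤ dist ((AA n ω * (AA n ω)ᵀ).det) ((α * αᵀ).det)})
          ∪ {ω | ε ≤ dist (gg n ω) (Pα.mulVec β)}) := measure_mono hsubset
    _ ≤ μ ({ω | (1/2 : ℝ) ≤ dist ((SS n ω).det) 1}
          ∪ {ω | |(α * αᵀ).det| ≤ dist ((AA n ω * (AA n ω)ᵀ).det) ((α * αᵀ).det)})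
          + μ {ω | ε ≤ dist (gg n ω) (Pα.mulVec β)} := measure_union_le _ _
    _ ≤ μ {ω | (1/2 : ℝ) ≤ dist ((SS n ω).det) 1}
          + μ {ω | |(α * αᵀ).det| ≤ dist ((AA n ω * (AA n ω)ᵀ).det) ((α * αᵀ).det)}
          + μ {ω | ε ≤ dist (gg n ω) (Pα.mulVec β)} :=
        add_le_add_left (measure_union_le _ _) _
  have hlim : Tendsto (fun n => μ {ω | (1/2 : ℝ) ≤ dist ((SS n ω).det) 1}
      + μ {ω | |(α * αᵀ).det| ≤ dist ((AA n ω * (AA n ω)ᵀ).det) ((α * αᵀ).det)}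
      + μ {ω | ε ≤ dist (gg n ω) (Pα.mulVec β)}) atTop (𝓝 0) := by
    have := (h1.add h2).add h3
    simpa using this
  refine tendsto_of_tendsto_of_tendsto_of_le_of_le' tendsto_const_nhds hlim ?_ ?_
  · exact Filter.Eventually.of_forall fun n => zero_le
  · exact Filter.eventually_atTop.2 ⟨1, fun n hn => hsub n hn⟩
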